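/- arXiv:1103.4614 — 4 statements merged into one kernel-verified Lean document; each statement's English description precedes it below -/
import Mathlib

section
/- Let (v_g)_{g∈G} and (v′_g)_{g∈G} be two norm-minimizing G-decompositions of the same vector β ∈ ℝ^p, i.e. both attain the infimum defining ‖β‖_{2,1,G}. Then for every g ∈ G, either ‖v_g‖₂ · ‖v′_g‖₂ = 0, or v_g/‖v_g‖₂ = v′_g/‖v′_g‖₂. -/
open Finset

/-- The Euclidean (ℓ2) norm of a vector in ℝ^p. -/
noncomputable def l2norm {p : ℕ} (v : Fin p → ℝ) : ℝ := Real.sqrt (∑ j, v j ^ 2)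

/-- A `G`-decomposition of `β`: a family `(v_g)_{g ∈ G}` of vectors with
`supp (v g) ⊆ g` for each `g ∈ G` and `∑_{g ∈ G} v g = β`. -/
def IsDecomp {p : ℕ} (G : Finset (Finset (Fin p))) (β : Fin p → ℝ)
    (v : Finset (Fin p) → Fin p → ℝ) : Prop :=
  (∀ g ∈ G, ∀ j, j ∉ g → v g j = 0) ∧ (∑ g ∈ G, v g) = β

/-- The overlap norm `‖β‖_{2,1,G}`. -/
noncomputable def overlapNorm {p : ℕ} (G : Finset (Finset (Fin p))) (β : Fin p → ℝ) : ℝ :=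
  sInf {r : ℝ | ∃ v, IsDecomp G β v ∧ r = ∑ g ∈ G, l2norm (v g)}

/-- A norm-minimizing `G`-decomposition of `β`. -/
def IsMinDecomp {p : ℕ} (G : Finset (Finset (Fin p))) (β : Fin p → ℝ)
    (v : Finset (Fin p) → Fin p → ℝ) : Prop :=
  IsDecomp G β v ∧ ∑ g ∈ G, l2norm (v g) = overlapNorm G β

lemma l2norm_eq_norm {p : ℕ} (x : Fin p → ℝ) :
    l2norm x = ‖(WithLp.equiv 2 (Fin p → ℝ)).symm x‖ := by
  simp [l2norm, EuclideanSpace.norm_eq, Real.norm_eq_abs, sq_abs]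

lemma l2norm_nonneg {p : ℕ} (x : Fin p → ℝ) : 0 ≤ l2norm x := Real.sqrt_nonneg _

lemma l2norm_zero {p : ℕ} : l2norm (0 : Fin p → ℝ) = 0 := by simp [l2norm]

lemma withLp_equiv_symm_add {p : ℕ} (x y : Fin p → ℝ) :
    (WithLp.equiv 2 (Fin p → ℝ)).symm (x + y) =
      (WithLp.equiv 2 (Fin p → ℝ)).symm x + (WithLp.equiv 2 (Fin p → ℝ)).symm y := rfl

lemma withLp_equiv_symm_smul {p : ℕ} (c : ℝ) (x : Fin p → ℝ) :
    (WithLp.equiv 2 (Fin p → ℝ)).symm (c • x) = c • (WithLp.equiv 2 (Fin p → ℝ)).symm x := rfl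

lemma l2norm_add_le {p : ℕ} (x y : Fin p → ℝ) : l2norm (x + y) ≤ l2norm x + l2norm y := by
  rw [l2norm_eq_norm, l2norm_eq_norm, l2norm_eq_norm, withLp_equiv_symm_add]
  exact norm_add_le _ _

lemma l2norm_smul {p : ℕ} (c : ℝ) (x : Fin p → ℝ) : l2norm (c • x) = |c| * l2norm x := by
  rw [l2norm_eq_norm, l2norm_eq_norm, withLp_equiv_symm_smul, norm_smul, Real.norm_eq_abs]

lemma dir_eq {p : ℕ} (x y : Fin p → ℝ) (h : l2norm (x + y) = l2norm x + l2norm y)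
    (hx : x ≠ 0) (hy : y ≠ 0) : (l2norm x)⁻¹ • x = (l2norm y)⁻¹ • y := by
  set a := (WithLp.equiv 2 (Fin p → ℝ)).symm x with ha'
  set b := (WithLp.equiv 2 (Fin p → ℝ)).symm y with hb'
  have ha : a ≠ 0 := by simpa [ha'] using hx
  have hb : b ≠ 0 := by simpa [hb'] using hy
  have h' : ‖a + b‖ = ‖a‖ + ‖b‖ := by
    rw [ha', hb', ← withLp_equiv_symm_add, ← l2norm_eq_norm, ← l2norm_eq_norm, ← l2norm_eq_norm]
    exact h
  have key := (sameRay_iff_norm_add.mpr h').inv_norm_smul_eq ha hb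
  rw [ha', hb', ← withLp_equiv_symm_smul, ← withLp_equiv_symm_smul] at key
  have := (WithLp.equiv 2 (Fin p → ℝ)).symm.injective key
  rw [l2norm_eq_norm, l2norm_eq_norm]
  exact this

/-- any two norm-minimizing `G`-decompositions of the same vector `β` satisfy,
for every `g ∈ G`: either `‖v_g‖·‖v'_g‖ = 0`, or `v_g/‖v_g‖ = v'_g/‖v'_g‖`. -/
theorem minDecomp_directions_agree {p : ℕ} (hp : 1 ≤ p)
    (G : Finset (Finset (Fin p))) (hGne : G.Nonempty)
    (hcover : ∀ i : Fin p, ∃ g ∈ G, i ∈ g)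
    (β : Fin p → ℝ) (v v' : Finset (Fin p) → Fin p → ℝ)
    (hv : IsMinDecomp G β v) (hv' : IsMinDecomp G β v') :
    ∀ g ∈ G, l2norm (v g) * l2norm (v' g) = 0 ∨
      (l2norm (v g))⁻¹ • v g = (l2norm (v' g))⁻¹ • v' g := by
  obtain ⟨⟨hvs, hvsum⟩, hvmin⟩ := hv
  obtain ⟨⟨hvs', hvsum'⟩, hvmin'⟩ := hv'
  set M := overlapNorm G β with hM
  set w : Finset (Fin p) → Fin p → ℝ := fun g => (1/2 : ℝ) • (v g + v' g) with hw
  have hwdec : IsDecomp G β w := by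
    constructor
    · intro g hg j hj
      simp [hw, hvs g hg j hj, hvs' g hg j hj]
    · have : ∑ g ∈ G, w g = (1/2 : ℝ) • (∑ g ∈ G, v g + ∑ g ∈ G, v' g) := by
        rw [hw, ← Finset.smul_sum, Finset.sum_add_distrib]
      rw [this, hvsum, hvsum']
      ext j; simp; ring
  have hbdd : BddBelow {r : ℝ | ∃ u, IsDecomp G β u ∧ r = ∑ g ∈ G, l2norm (u g)} := by
    refine ⟨0, fun r hr => ?_⟩
    obtain ⟨u, _, rfl⟩ := hr
    exact Finset.sum_nonneg fun g _ => l2norm_nonneg _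
  have hlow : M ≤ ∑ g ∈ G, l2norm (w g) :=
    csInf_le hbdd ⟨w, hwdec, rfl⟩
  have hterm : ∀ g ∈ G, l2norm (w g) ≤ (l2norm (v g) + l2norm (v' g)) / 2 := by
    intro g hg
    have : l2norm (w g) = (1/2) * l2norm (v g + v' g) := by
      show l2norm ((1/2 : ℝ) • (v g + v' g)) = _
      rw [l2norm_smul, abs_of_nonneg (by norm_num : (0:ℝ) ≤ 1/2)]
    rw [this]
    linarith [l2norm_add_le (v g) (v' g)]
  have hsum2 : ∑ g ∈ G, (l2norm (v g) + l2norm (v' g)) / 2 = M := by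
    rw [← Finset.sum_div, Finset.sum_add_distrib, hvmin, hvmin']
    ring
  have heq : ∑ g ∈ G, l2norm (w g) = ∑ g ∈ G, (l2norm (v g) + l2norm (v' g)) / 2 := by
    have := Finset.sum_le_sum hterm
    rw [hsum2] at this ⊢
    linarith
  have htermeq := (Finset.sum_eq_sum_iff_of_le hterm).mp heq
  intro g hg
  by_cases h0 : v g = 0
  · left; rw [h0, l2norm_zero, zero_mul]
  by_cases h0' : v' g = 0
  · left; rw [h0', l2norm_zero, mul_zero]
  right
  refine dir_eq _ _ ?_ h0 h0'
  have := htermeq g hg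
  have hws : l2norm (w g) = (1/2) * l2norm (v g + v' g) := by
    show l2norm ((1/2 : ℝ) • (v g + v' g)) = _
    rw [l2norm_smul, abs_of_nonneg (by norm_num : (0:ℝ) ≤ 1/2)]
  rw [hws] at this
  linarith
end

section
/- Let Δ ∈ ℝ^p, let (v_g)_{g∈G} be a norm-minimizing G-decomposition of Δ, let J ⊆ G, and let λ > 0, κ > 0. Suppose (i) (1/n)‖XΔ‖₂² + λ‖Δ‖_{2,1,G} ≤ 4λ·Σ_{g∈J}‖v_g‖₂, and (ii) √(ΔᵀXᵀXΔ) ≥ κ·√n·Σ_{g∈J}‖v_g‖₂. Then the cone condition Σ_{g∉J}‖v_g‖₂ ≤ 3·Σ_{g∈J}‖v_g‖₂ holds, and moreover (1/n)‖XΔ‖₂² ≤ 16λ²/κ² and ‖Δ‖_{2,1,G} ≤ 16λ/κ². -/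
open Finset
set_option maxHeartbeats 1000000

/-- basic oracle inequality step. If a norm-minimizing decomposition of `Δ`
satisfies the two displayed inequalities, then the cone condition holds and both the
prediction and estimation bounds follow. -/
theorem oracle_deterministic_step {p n : ℕ} (hp : 1 ≤ p) (hn : 1 ≤ n)
    (G : Finset (Finset (Fin p))) (hGne : G.Nonempty)
    (hcover : ∀ i : Fin p, ∃ g ∈ G, i ∈ g)
    (X : Matrix (Fin n) (Fin p) ℝ)
    (Δ : Fin p → ℝ) (v : Finset (Fin p) → Fin p → ℝ) (hv : IsMinDecomp G Δ v)
    (J : Finset (Finset (Fin p))) (hJ : J ⊆ G)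
    (lam κ : ℝ) (hlam : 0 < lam) (hκ : 0 < κ)
    (h1 : (1 / (n : ℝ)) * ∑ i, (X.mulVec Δ) i ^ 2 + lam * overlapNorm G Δ ≤
      4 * lam * ∑ g ∈ J, l2norm (v g))
    (h2 : κ * Real.sqrt n * ∑ g ∈ J, l2norm (v g) ≤ Real.sqrt (∑ i, (X.mulVec Δ) i ^ 2)) :
    (∑ g ∈ G \ J, l2norm (v g) ≤ 3 * ∑ g ∈ J, l2norm (v g)) ∧
    (1 / (n : ℝ)) * ∑ i, (X.mulVec Δ) i ^ 2 ≤ 16 * lam ^ 2 / κ ^ 2 ∧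
    overlapNorm G Δ ≤ 16 * lam / κ ^ 2 := by
  classical
  set S := ∑ g ∈ J, l2norm (v g) with hS
  set T := ∑ g ∈ G \ J, l2norm (v g) with hT
  have hsplit : ∑ g ∈ G, l2norm (v g) = S + T := by
    rw [hS, hT, ← Finset.sum_sdiff hJ]; ring
  have hN : overlapNorm G Δ = S + T := by rw [← hv.2, hsplit]
  have hSnn : 0 ≤ S := Finset.sum_nonneg fun g _ => Real.sqrt_nonneg _
  have hTnn : 0 ≤ T := Finset.sum_nonneg fun g _ => Real.sqrt_nonneg _
  set Q := ∑ i, (X.mulVec Δ) i ^ 2 with hQdef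
  have hQnn : 0 ≤ Q := Finset.sum_nonneg fun i _ => sq_nonneg _
  clear_value S T Q
  have hnpos : (0:ℝ) < n := by exact_mod_cast hn
  have hQn : 0 ≤ (1 / (n:ℝ)) * Q := by positivity
  rw [hN] at h1
  have hcone : T ≤ 3 * S := by nlinarith
  -- square h2
  have hsq : κ ^ 2 * (n:ℝ) * S ^ 2 ≤ Q := by
    have h2' : (κ * Real.sqrt n * S) ^ 2 ≤ Real.sqrt Q ^ 2 := by
      apply sq_le_sq' _ h2
      have : 0 ≤ κ * Real.sqrt n * S := by positivity
      linarith [Real.sqrt_nonneg Q]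
    rw [Real.sq_sqrt hQnn] at h2'
    calc κ ^ 2 * (n:ℝ) * S ^ 2 = (κ * Real.sqrt n * S) ^ 2 := by
          rw [mul_pow, mul_pow, Real.sq_sqrt (le_of_lt hnpos)]
        _ ≤ Q := h2'
  have hsq' : κ ^ 2 * S ^ 2 ≤ (1 / (n:ℝ)) * Q := by
    rw [div_mul_eq_mul_div, one_mul, le_div_iff₀ hnpos]; nlinarith
  have hQb : (1 / (n:ℝ)) * Q ≤ 4 * lam * S := by nlinarith
  have hk2 : (0:ℝ) < κ ^ 2 := by positivity
  have hST : S + T ≤ 4 * S := by nlinarith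
  have hk2S : κ ^ 2 * S ^ 2 ≤ 4 * lam * S := hsq'.trans hQb
  have hfinal : ((1 / (n:ℝ)) * Q) * κ ^ 2 ≤ 16 * lam ^ 2 ∧ (S + T) * κ ^ 2 ≤ 16 * lam := by
    rcases hSnn.lt_or_eq with hpos | h0
    · have hκS : κ ^ 2 * S ≤ 4 * lam := by nlinarith [mul_pos hk2 hpos]
      constructor
      · nlinarith [mul_le_mul_of_nonneg_right hQb hk2.le]
      · nlinarith [mul_le_mul_of_nonneg_right hST hk2.le]
    · rw [← h0] at hQb hST
      constructor <;>
        nlinarith [mul_le_mul_of_nonneg_right hQb hk2.le,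
          mul_le_mul_of_nonneg_right hST hk2.le, mul_pos hlam hlam]
  refine ⟨hcone, ?_, ?_⟩
  · rw [le_div_iff₀ hk2]; exact hfinal.1
  · rw [hN, le_div_iff₀ hk2]; exact hfinal.2
end

section
/- Let p = 5 and G = {{1,2}, {3,4}, {1,2,3,4}, {5}}. Let a > 0, c ∈ ℝ, and β⁰ = (a, a, 0, 0, c) ∈ ℝ⁵. Then ‖β⁰‖_{2,1,G} = √2·a + |c|, and for every α with 0 < α < a, the G-decomposition v_{{1,2}} = (a−α, a−α, 0, 0, 0), v_{{3,4}} = (0,0,0,0,0), v_{{1,2,3,4}} = (α, α, 0, 0, 0), v_{{5}} = (0, 0, 0, 0, c) is norm-minimizing. In particular, β⁰ has infinitely many distinct norm-minimizing G-decompositions. -/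
open Finset

section Aux

lemma sumG {M : Type*} [AddCommMonoid M] (f : Finset (Fin 5) → M) :
    ∑ g ∈ ({({0,1}:Finset (Fin 5)), {2,3}, {0,1,2,3}, {4}} : Finset (Finset (Fin 5))), f g
      = f {0,1} + f {2,3} + f {0,1,2,3} + f {4} := by
  rw [Finset.sum_insert (by decide), Finset.sum_insert (by decide),
    Finset.sum_insert (by decide), Finset.sum_singleton]
  simp [add_assoc]

lemma l2_xx (x : ℝ) : l2norm ![x,x,0,0,0] = Real.sqrt 2 * |x| := by
  simp only [l2norm, Fin.sum_univ_five, Matrix.cons_val_zero, Matrix.cons_val_one,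
    Matrix.head_cons, Matrix.cons_val_two, Matrix.tail_cons, Matrix.cons_val_three,
    Matrix.cons_val_four]
  rw [show x^2 + x^2 + 0^2 + 0^2 + 0^2 = 2 * x^2 by ring, Real.sqrt_mul (by norm_num),
    Real.sqrt_sq_eq_abs]

lemma l2_last (c : ℝ) : l2norm ![0,0,0,0,c] = |c| := by
  simp only [l2norm, Fin.sum_univ_five, Matrix.cons_val_zero, Matrix.cons_val_one,
    Matrix.head_cons, Matrix.cons_val_two, Matrix.tail_cons, Matrix.cons_val_three,
    Matrix.cons_val_four]
  rw [show (0:ℝ)^2 + 0^2 + 0^2 + 0^2 + c^2 = c^2 by ring, Real.sqrt_sq_eq_abs]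

lemma l2_zero : l2norm (0 : Fin 5 → ℝ) = 0 := by simp [l2norm]

lemma l2_nonneg (v : Fin 5 → ℝ) : 0 ≤ l2norm v := Real.sqrt_nonneg _

lemma lemA (v : Fin 5 → ℝ) : |v 0 + v 1| ≤ Real.sqrt 2 * l2norm v := by
  rw [l2norm, ← Real.sqrt_sq_eq_abs, ← Real.sqrt_mul (by norm_num : (0:ℝ) ≤ 2)]
  apply Real.sqrt_le_sqrt
  rw [Fin.sum_univ_five]
  nlinarith [sq_nonneg (v 0 - v 1), sq_nonneg (v 2), sq_nonneg (v 3), sq_nonneg (v 4)]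

lemma lemB (v : Fin 5 → ℝ) : |v 4| ≤ l2norm v := by
  rw [l2norm, ← Real.sqrt_sq_eq_abs]
  apply Real.sqrt_le_sqrt
  rw [Fin.sum_univ_five]
  nlinarith [sq_nonneg (v 0), sq_nonneg (v 1), sq_nonneg (v 2), sq_nonneg (v 3)]

/-- The displayed decomposition, as a function of `α`. -/
def vdec (a c α : ℝ) : Finset (Fin 5) → Fin 5 → ℝ := fun g =>
  if g = ({0, 1} : Finset (Fin 5)) then ![a - α, a - α, 0, 0, 0]
  else if g = ({2, 3} : Finset (Fin 5)) then 0
  else if g = ({0, 1, 2, 3} : Finset (Fin 5)) then ![α, α, 0, 0, 0]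
  else if g = ({4} : Finset (Fin 5)) then ![0, 0, 0, 0, c]
  else 0

lemma vdec_01 (a c α : ℝ) : vdec a c α {0,1} = ![a - α, a - α, 0, 0, 0] := by
  simp [vdec]

lemma vdec_23 (a c α : ℝ) : vdec a c α {2,3} = 0 := by
  rw [vdec, if_neg (by decide), if_pos rfl]

lemma vdec_0123 (a c α : ℝ) : vdec a c α {0,1,2,3} = ![α, α, 0, 0, 0] := by
  rw [vdec, if_neg (by decide), if_neg (by decide), if_pos rfl]

lemma vdec_4 (a c α : ℝ) : vdec a c α {4} = ![0, 0, 0, 0, c] := by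
  rw [vdec, if_neg (by decide), if_neg (by decide), if_neg (by decide), if_pos rfl]

lemma vdec_isDecomp (a c α : ℝ) :
    IsDecomp ({({0,1}:Finset (Fin 5)), {2,3}, {0,1,2,3}, {4}}) ![a, a, 0, 0, c]
      (vdec a c α) := by
  constructor
  · intro g hg j hj
    simp only [Finset.mem_insert, Finset.mem_singleton] at hg
    rcases hg with rfl | rfl | rfl | rfl
    · rw [vdec_01]; fin_cases j <;> simp_all
    · rw [vdec_23]; rfl
    · rw [vdec_0123]; fin_cases j <;> simp_all
    · rw [vdec_4]; fin_cases j <;> simp_all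
  · rw [sumG, vdec_01, vdec_23, vdec_0123, vdec_4]
    funext j
    fin_cases j <;> simp

lemma vdec_normsum (a c α : ℝ) :
    ∑ g ∈ ({({0,1}:Finset (Fin 5)), {2,3}, {0,1,2,3}, {4}} : Finset (Finset (Fin 5))),
        l2norm (vdec a c α g)
      = Real.sqrt 2 * |a - α| + Real.sqrt 2 * |α| + |c| := by
  rw [sumG, vdec_01, vdec_23, vdec_0123, vdec_4, l2_xx, l2_xx, l2_zero, l2_last]
  ring

lemma lower (a c : ℝ) (v : Finset (Fin 5) → Fin 5 → ℝ)
    (hv : IsDecomp ({({0,1}:Finset (Fin 5)), {2,3}, {0,1,2,3}, {4}}) ![a, a, 0, 0, c] v) :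
    Real.sqrt 2 * a + |c| ≤
      ∑ g ∈ ({({0,1}:Finset (Fin 5)), {2,3}, {0,1,2,3}, {4}} : Finset (Finset (Fin 5))),
        l2norm (v g) := by
  obtain ⟨hsupp, hsum⟩ := hv
  rw [sumG] at hsum ⊢
  have h0 := congrFun hsum 0
  have h1 := congrFun hsum 1
  have h4 := congrFun hsum 4
  simp only [Pi.add_apply, Matrix.cons_val_zero, Matrix.cons_val_one, Matrix.head_cons,
    Matrix.cons_val_four, Matrix.cons_val_succ, Matrix.vecHead, Matrix.vecTail,
    Function.comp] at h0 h1 h4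
  have e1 : v {2,3} 0 = 0 := hsupp {2,3} (by decide) 0 (by decide)
  have e2 : v {4} 0 = 0 := hsupp {4} (by decide) 0 (by decide)
  have e3 : v {2,3} 1 = 0 := hsupp {2,3} (by decide) 1 (by decide)
  have e4 : v {4} 1 = 0 := hsupp {4} (by decide) 1 (by decide)
  have e5 : v {0,1} 4 = 0 := hsupp {0,1} (by decide) 4 (by decide)
  have e6 : v {2,3} 4 = 0 := hsupp {2,3} (by decide) 4 (by decide)
  have e7 : v {0,1,2,3} 4 = 0 := hsupp {0,1,2,3} (by decide) 4 (by decide)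
  have s0 : v {0,1} 0 + v {0,1,2,3} 0 = a := by rw [e1, e2] at h0; linarith
  have s1 : v {0,1} 1 + v {0,1,2,3} 1 = a := by rw [e3, e4] at h1; linarith
  have s4 : v {4} 4 = c := by rw [e5, e6, e7] at h4; linarith
  have hA := lemA (v {0,1})
  have hB := lemA (v {0,1,2,3})
  have hC := lemB (v {4})
  rw [s4] at hC
  have habs1 : v {0,1} 0 + v {0,1} 1 ≤ |v {0,1} 0 + v {0,1} 1| := le_abs_self _
  have habs2 : v {0,1,2,3} 0 + v {0,1,2,3} 1 ≤ |v {0,1,2,3} 0 + v {0,1,2,3} 1| :=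
    le_abs_self _
  have hD := l2_nonneg (v {2,3})
  have hsq : Real.sqrt 2 * Real.sqrt 2 = 2 := Real.mul_self_sqrt (by norm_num)
  have h2pos : (0:ℝ) < Real.sqrt 2 := Real.sqrt_pos.2 (by norm_num)
  nlinarith [l2_nonneg (v {0,1}), l2_nonneg (v {0,1,2,3})]

lemma overlap_eq (a c : ℝ) (ha : 0 < a) :
    overlapNorm ({({0,1}:Finset (Fin 5)), {2,3}, {0,1,2,3}, {4}}) ![a, a, 0, 0, c]
      = Real.sqrt 2 * a + |c| := by
  have hmem : Real.sqrt 2 * a + |c| ∈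
      {r : ℝ | ∃ v, IsDecomp ({({0,1}:Finset (Fin 5)), {2,3}, {0,1,2,3}, {4}})
          ![a, a, 0, 0, c] v ∧
        r = ∑ g ∈ ({({0,1}:Finset (Fin 5)), {2,3}, {0,1,2,3}, {4}} :
               Finset (Finset (Fin 5))), l2norm (v g)} := by
    refine ⟨vdec a c 0, vdec_isDecomp a c 0, ?_⟩
    rw [vdec_normsum]
    rw [sub_zero, abs_zero, abs_of_pos ha]
    ring
  have hlb : ∀ r ∈ {r : ℝ | ∃ v, IsDecomp ({({0,1}:Finset (Fin 5)), {2,3}, {0,1,2,3}, {4}})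
          ![a, a, 0, 0, c] v ∧
        r = ∑ g ∈ ({({0,1}:Finset (Fin 5)), {2,3}, {0,1,2,3}, {4}} :
               Finset (Finset (Fin 5))), l2norm (v g)},
      Real.sqrt 2 * a + |c| ≤ r := by
    rintro r ⟨v, hv, rfl⟩
    exact lower a c v hv
  exact le_antisymm (csInf_le ⟨_, hlb⟩ hmem) (le_csInf ⟨_, hmem⟩ hlb)

lemma vdec_isMinDecomp (a c : ℝ) (ha : 0 < a) (α : ℝ) (h1 : 0 < α) (h2 : α < a) :
    IsMinDecomp ({({0,1}:Finset (Fin 5)), {2,3}, {0,1,2,3}, {4}}) ![a, a, 0, 0, c]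
      (vdec a c α) := by
  refine ⟨vdec_isDecomp a c α, ?_⟩
  rw [overlap_eq a c ha, vdec_normsum, abs_of_pos h1, abs_of_pos (by linarith : (0:ℝ) < a - α)]
  ring

end Aux

/-- for `p = 5` and `G = {{1,2},{3,4},{1,2,3,4},{5}}` (0-indexed here as
`{{0,1},{2,3},{0,1,2,3},{4}}`) and `β⁰ = (a,a,0,0,c)` with `a > 0`:
`‖β⁰‖_{2,1,G} = √2·a + |c|`; for every `0 < α < a` the displayed decomposition is
norm-minimizing; and there are infinitely many distinct norm-minimizing decompositions. -/
theorem nested_groups_nonunique_decomposition (a c : ℝ) (ha : 0 < a) :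
    let G : Finset (Finset (Fin 5)) :=
      {({0, 1} : Finset (Fin 5)), {2, 3}, {0, 1, 2, 3}, {4}}
    let β0 : Fin 5 → ℝ := ![a, a, 0, 0, c]
    overlapNorm G β0 = Real.sqrt 2 * a + |c| ∧
    (∀ α : ℝ, 0 < α → α < a →
      IsMinDecomp G β0 (fun g =>
        if g = ({0, 1} : Finset (Fin 5)) then ![a - α, a - α, 0, 0, 0]
        else if g = ({2, 3} : Finset (Fin 5)) then 0
        else if g = ({0, 1, 2, 3} : Finset (Fin 5)) then ![α, α, 0, 0, 0]
        else if g = ({4} : Finset (Fin 5)) then ![0, 0, 0, 0, c]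
        else 0)) ∧
    {v : Finset (Fin 5) → Fin 5 → ℝ | IsMinDecomp G β0 v}.Infinite := by
  intro G β0
  refine ⟨overlap_eq a c ha, fun α h1 h2 => vdec_isMinDecomp a c ha α h1 h2, ?_⟩
  have hinj : Set.InjOn (fun α => vdec a c α) (Set.Ioo 0 a) := by
    intro x _ y _ h
    have h' : vdec a c x = vdec a c y := h
    have h2 : (![x, x, 0, 0, 0] : Fin 5 → ℝ) = ![y, y, 0, 0, 0] := by
      rw [← vdec_0123 a c x, ← vdec_0123 a c y, h']
    simpa using congrFun h2 0
  have himg : ((fun α => vdec a c α) '' Set.Ioo 0 a).Infinite :=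
    (Set.Ioo_infinite ha).image hinj
  refine himg.mono ?_
  rintro _ ⟨α, hα, rfl⟩
  exact vdec_isMinDecomp a c ha α hα.1 hα.2
end

section
/- Let p = 5 and G = {{1,2}, {3,4}, {1,2,3,4}, {5}}. Let β ∈ ℝ⁵ with (β₁, β₂) ≠ (0,0) and (β₃, β₄) ≠ (0,0). Then ‖β‖_{2,1,G} = √(β₁² + β₂² + β₃² + β₄²) + |β₅|, and the unique norm-minimizing G-decomposition of β is v_{{1,2}} = 0, v_{{3,4}} = 0, v_{{1,2,3,4}} = (β₁, β₂, β₃, β₄, 0), v_{{5}} = (0, 0, 0, 0, β₅). In particular, the nested groups {1,2} and {3,4} are never used in a norm-minimizing decomposition of such β. -/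
open Finset

noncomputable def toE (w : Fin 5 → ℝ) : EuclideanSpace ℝ (Fin 5) :=
  (WithLp.equiv 2 (Fin 5 → ℝ)).symm w

lemma toE_inj : Function.Injective toE := (WithLp.equiv 2 (Fin 5 → ℝ)).symm.injective

lemma toE_zero : toE 0 = 0 := rfl

lemma l2norm_eq_norm_s15 (w : Fin 5 → ℝ) : l2norm w = ‖toE w‖ := by
  simp [l2norm, toE, EuclideanSpace.norm_eq, Real.norm_eq_abs, sq_abs]

lemma sum_G4 {M : Type*} [AddCommMonoid M] (f : Finset (Fin 5) → M) :
    ∑ g ∈ ({({0,1} : Finset (Fin 5)), {2,3}, {0,1,2,3}, {4}} : Finset (Finset (Fin 5))), f g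
      = f {0,1} + f {2,3} + f {0,1,2,3} + f {4} := by
  rw [Finset.sum_insert (by decide), Finset.sum_insert (by decide),
    Finset.sum_insert (by decide), Finset.sum_singleton]
  abel

lemma matval (β : Fin 5 → ℝ) (j : Fin 5) :
    ![β 0, β 1, β 2, β 3, 0] j = if j = 4 then 0 else β j := by
  fin_cases j <;> rfl

lemma matval4 (x : ℝ) (j : Fin 5) :
    ![0, 0, 0, 0, x] j = if j = 4 then x else 0 := by
  fin_cases j <;> rfl


/-- for `p = 5` and `G = {{1,2},{3,4},{1,2,3,4},{5}}` (0-indexed here as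
`{{0,1},{2,3},{0,1,2,3},{4}}`), if `(β₁,β₂) ≠ (0,0)` and `(β₃,β₄) ≠ (0,0)` then
`‖β‖_{2,1,G} = √(β₁²+β₂²+β₃²+β₄²) + |β₅|`, and the unique norm-minimizing decomposition
puts all the mass on the big group `{1,2,3,4}` and on `{5}`, never using the nested
groups `{1,2}` and `{3,4}`. -/
theorem nested_groups_never_used (β : Fin 5 → ℝ)
    (h12 : (β 0, β 1) ≠ (0, 0)) (h34 : (β 2, β 3) ≠ (0, 0)) :
    let G : Finset (Finset (Fin 5)) :=
      {({0, 1} : Finset (Fin 5)), {2, 3}, {0, 1, 2, 3}, {4}}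
    let vstar : Finset (Fin 5) → Fin 5 → ℝ := fun g =>
      if g = ({0, 1, 2, 3} : Finset (Fin 5)) then ![β 0, β 1, β 2, β 3, 0]
      else if g = ({4} : Finset (Fin 5)) then ![0, 0, 0, 0, β 4]
      else 0
    overlapNorm G β = Real.sqrt (β 0 ^ 2 + β 1 ^ 2 + β 2 ^ 2 + β 3 ^ 2) + |β 4| ∧
    IsMinDecomp G β vstar ∧
    ∀ v : Finset (Fin 5) → Fin 5 → ℝ, IsMinDecomp G β v → ∀ g ∈ G, v g = vstar g := by
  intro G vstar
  have hGdef : G = ({({0,1} : Finset (Fin 5)), {2,3}, {0,1,2,3}, {4}} :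
      Finset (Finset (Fin 5))) := rfl
  have hv1 : vstar {0,1} = 0 := by
    show (if _ then _ else if _ then _ else _) = _
    rw [if_neg (by decide), if_neg (by decide)]
  have hv2 : vstar {2,3} = 0 := by
    show (if _ then _ else if _ then _ else _) = _
    rw [if_neg (by decide), if_neg (by decide)]
  have hv3 : vstar {0,1,2,3} = ![β 0, β 1, β 2, β 3, 0] := by
    show (if _ then _ else _) = _
    rw [if_pos rfl]
  have hv4 : vstar {4} = ![0,0,0,0,β 4] := by
    show (if _ then _ else if _ then _ else _) = _
    rw [if_neg (by decide), if_pos rfl]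
  set R := Real.sqrt (β 0 ^ 2 + β 1 ^ 2 + β 2 ^ 2 + β 3 ^ 2) + |β 4| with hRdef
  have hm1 : ({0,1} : Finset (Fin 5)) ∈ G := by rw [hGdef]; decide
  have hm2 : ({2,3} : Finset (Fin 5)) ∈ G := by rw [hGdef]; decide
  have hm3 : ({0,1,2,3} : Finset (Fin 5)) ∈ G := by rw [hGdef]; decide
  have hm4 : ({4} : Finset (Fin 5)) ∈ G := by rw [hGdef]; decide
  have hnorm0 : l2norm (0 : Fin 5 → ℝ) = 0 := by simp [l2norm]
  have hnormb : l2norm ![β 0, β 1, β 2, β 3, 0]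
      = Real.sqrt (β 0 ^ 2 + β 1 ^ 2 + β 2 ^ 2 + β 3 ^ 2) := by
    simp [l2norm, Fin.sum_univ_five]
  have hnorm4 : l2norm ![0,0,0,0,β 4] = |β 4| := by
    simp [l2norm, Fin.sum_univ_five, Real.sqrt_sq_eq_abs]
  -- vstar is a decomposition with cost R
  have hvstar_decomp : IsDecomp G β vstar := by
    constructor
    · intro g hg j hj
      rw [hGdef] at hg
      simp only [Finset.mem_insert, Finset.mem_singleton] at hg
      rcases hg with rfl | rfl | rfl | rfl
      · rw [hv1]; rfl
      · rw [hv2]; rfl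
      · rw [hv3, matval, if_pos]
        fin_cases j <;> first | (exact absurd (by decide) hj) | rfl
      · rw [hv4, matval4, if_neg]
        intro h; subst h; exact hj (by decide)
    · rw [hGdef, sum_G4, hv1, hv2, hv3, hv4]
      funext j
      simp only [Pi.add_apply, Pi.zero_apply, matval, matval4]
      by_cases hj : j = 4
      · subst hj; simp
      · simp [hj]
  have hvstar_cost : ∑ g ∈ G, l2norm (vstar g) = R := by
    rw [hGdef, sum_G4, hv1, hv2, hv3, hv4, hnorm0, hnormb, hnorm4, hRdef]
    ring
  -- structure of an arbitrary decomposition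
  have key : ∀ v : Finset (Fin 5) → Fin 5 → ℝ, IsDecomp G β v →
      v {4} = ![0,0,0,0,β 4] ∧
      (v ({0,1} : Finset (Fin 5))) + v {2,3} + v {0,1,2,3} = ![β 0, β 1, β 2, β 3, 0] ∧
      R ≤ ∑ g ∈ G, l2norm (v g) := by
    intro v ⟨hsupp, hsum⟩
    rw [hGdef, sum_G4] at hsum
    have h4 : v {4} = ![0,0,0,0,β 4] := by
      funext j
      rw [matval4]
      by_cases hj : j = 4
      · subst hj
        rw [if_pos rfl]
        have h := congrFun hsum 4
        simp only [Pi.add_apply] at h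
        rw [hsupp _ hm1 4 (by decide), hsupp _ hm2 4 (by decide),
          hsupp _ hm3 4 (by decide)] at h
        linarith
      · rw [if_neg hj, hsupp _ hm4 j (by simpa using hj)]
    have hsum3 : (v ({0,1} : Finset (Fin 5))) + v {2,3} + v {0,1,2,3}
        = ![β 0, β 1, β 2, β 3, 0] := by
      funext j
      simp only [Pi.add_apply]
      rw [matval]
      by_cases hj : j = 4
      · subst hj
        rw [if_pos rfl, hsupp _ hm1 4 (by decide), hsupp _ hm2 4 (by decide),
          hsupp _ hm3 4 (by decide)]
        norm_num
      · rw [if_neg hj]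
        have h := congrFun hsum j
        simp only [Pi.add_apply] at h
        rw [h4, matval4, if_neg hj] at h
        linarith
    refine ⟨h4, hsum3, ?_⟩
    rw [hGdef, sum_G4, h4, hnorm4]
    have htri : Real.sqrt (β 0 ^ 2 + β 1 ^ 2 + β 2 ^ 2 + β 3 ^ 2)
        ≤ l2norm (v {0,1}) + l2norm (v {2,3}) + l2norm (v {0,1,2,3}) := by
      have hE : toE (v {0,1}) + toE (v {2,3}) + toE (v {0,1,2,3})
          = toE ![β 0, β 1, β 2, β 3, 0] := by rw [← hsum3]; rfl
      calc Real.sqrt (β 0 ^ 2 + β 1 ^ 2 + β 2 ^ 2 + β 3 ^ 2)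
          = ‖toE ![β 0, β 1, β 2, β 3, 0]‖ := by rw [← l2norm_eq_norm_s15, hnormb]
        _ = ‖toE (v {0,1}) + toE (v {2,3}) + toE (v {0,1,2,3})‖ := by rw [hE]
        _ ≤ ‖toE (v {0,1})‖ + ‖toE (v {2,3})‖ + ‖toE (v {0,1,2,3})‖ := norm_add₃_le
        _ = _ := by rw [← l2norm_eq_norm_s15, ← l2norm_eq_norm_s15, ← l2norm_eq_norm_s15]
    rw [hRdef]; linarith
  -- the overlap norm
  have hS : overlapNorm G β = R := by
    have hmem : R ∈ {r : ℝ | ∃ v, IsDecomp G β v ∧ r = ∑ g ∈ G, l2norm (v g)} :=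
      ⟨vstar, hvstar_decomp, hvstar_cost.symm⟩
    have hlb : ∀ r ∈ {r : ℝ | ∃ v, IsDecomp G β v ∧ r = ∑ g ∈ G, l2norm (v g)}, R ≤ r := by
      rintro r ⟨v, hv, rfl⟩
      exact (key v hv).2.2
    exact le_antisymm (csInf_le ⟨R, hlb⟩ hmem) (le_csInf ⟨R, hmem⟩ hlb)
  refine ⟨hS, ⟨hvstar_decomp, by rw [hvstar_cost, hS]⟩, ?_⟩
  -- uniqueness
  rintro v ⟨hvdec, hvcost⟩ g hg
  obtain ⟨h4, hsum3, -⟩ := key v hvdec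
  obtain ⟨hsupp, -⟩ := hvdec
  rw [hS] at hvcost
  set a := toE (v {0,1}) with ha
  set b := toE (v {2,3}) with hb
  set c := toE (v {0,1,2,3}) with hc
  have habc : a + b + c = toE ![β 0, β 1, β 2, β 3, 0] := by
    rw [ha, hb, hc, ← hsum3]; rfl
  have hnabc : ‖a + b + c‖ = Real.sqrt (β 0 ^ 2 + β 1 ^ 2 + β 2 ^ 2 + β 3 ^ 2) := by
    rw [habc, ← l2norm_eq_norm_s15, hnormb]
  have hcost3 : ‖a‖ + ‖b‖ + ‖c‖ = ‖a + b + c‖ := by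
    rw [hGdef, sum_G4, h4, hnorm4, l2norm_eq_norm_s15, l2norm_eq_norm_s15, l2norm_eq_norm_s15,
      ← ha, ← hb, ← hc, hRdef] at hvcost
    rw [hnabc]
    linarith
  have hβ' : toE ![β 0, β 1, β 2, β 3, 0] ≠ 0 := by
    intro h
    have h' : ![β 0, β 1, β 2, β 3, 0] = (0 : Fin 5 → ℝ) := toE_inj (by rw [h, toE_zero])
    have h2 : β 2 = 0 := congrFun h' 2
    have h3 : β 3 = 0 := congrFun h' 3
    exact h34 (by rw [h2, h3])
  -- v {0,1} = 0
  have hA : v ({0,1} : Finset (Fin 5)) = 0 := by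
    by_contra hne
    have hane : a ≠ 0 := fun h => hne (toE_inj (by rw [← ha, h, toE_zero]))
    have h1 : ‖a + (b + c)‖ = ‖a‖ + ‖b + c‖ := by
      refine le_antisymm (norm_add_le _ _) ?_
      have t1 := norm_add_le b c
      have t2 : ‖a + (b + c)‖ = ‖a + b + c‖ := by rw [add_assoc]
      linarith
    have hray : SameRay ℝ a (toE ![β 0, β 1, β 2, β 3, 0]) := by
      have h2 := (SameRay.refl a).add_right (sameRay_iff_norm_add.mpr h1)
      rwa [← add_assoc, habc] at h2
    obtain ⟨r, s, hr, hs, hrs⟩ := hray.exists_pos hane hβ'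
    have hrs' : r • (v {0,1}) = s • (![β 0, β 1, β 2, β 3, 0] : Fin 5 → ℝ) := by
      have h := congrArg (WithLp.equiv 2 (Fin 5 → ℝ)) hrs
      simpa [toE, ha] using h
    have e2 : s * β 2 = 0 := by
      have h := congrFun hrs' 2
      rw [Pi.smul_apply, Pi.smul_apply, hsupp _ hm1 2 (by decide), matval,
        if_neg (by decide), smul_eq_mul, smul_eq_mul, mul_zero] at h
      exact h.symm
    have e3 : s * β 3 = 0 := by
      have h := congrFun hrs' 3
      rw [Pi.smul_apply, Pi.smul_apply, hsupp _ hm1 3 (by decide), matval,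
        if_neg (by decide), smul_eq_mul, smul_eq_mul, mul_zero] at h
      exact h.symm
    have hb2 : β 2 = 0 := (mul_eq_zero.mp e2).resolve_left (ne_of_gt hs)
    have hb3 : β 3 = 0 := (mul_eq_zero.mp e3).resolve_left (ne_of_gt hs)
    exact h34 (by rw [hb2, hb3])
  -- v {2,3} = 0
  have hB : v ({2,3} : Finset (Fin 5)) = 0 := by
    by_contra hne
    have hbne : b ≠ 0 := fun h => hne (toE_inj (by rw [← hb, h, toE_zero]))
    have h1 : ‖b + (a + c)‖ = ‖b‖ + ‖a + c‖ := by
      refine le_antisymm (norm_add_le _ _) ?_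
      have t1 := norm_add_le a c
      have t2 : ‖b + (a + c)‖ = ‖a + b + c‖ := by rw [show b + (a + c) = a + b + c by abel]
      linarith
    have hray : SameRay ℝ b (toE ![β 0, β 1, β 2, β 3, 0]) := by
      have h2 := (SameRay.refl b).add_right (sameRay_iff_norm_add.mpr h1)
      rwa [show b + (a + c) = a + b + c by abel, habc] at h2
    obtain ⟨r, s, hr, hs, hrs⟩ := hray.exists_pos hbne hβ'
    have hrs' : r • (v {2,3}) = s • (![β 0, β 1, β 2, β 3, 0] : Fin 5 → ℝ) := by
      have h := congrArg (WithLp.equiv 2 (Fin 5 → ℝ)) hrs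
      simpa [toE, hb] using h
    have e0 : s * β 0 = 0 := by
      have h := congrFun hrs' 0
      rw [Pi.smul_apply, Pi.smul_apply, hsupp _ hm2 0 (by decide), matval,
        if_neg (by decide), smul_eq_mul, smul_eq_mul, mul_zero] at h
      exact h.symm
    have e1 : s * β 1 = 0 := by
      have h := congrFun hrs' 1
      rw [Pi.smul_apply, Pi.smul_apply, hsupp _ hm2 1 (by decide), matval,
        if_neg (by decide), smul_eq_mul, smul_eq_mul, mul_zero] at h
      exact h.symm
    have hb0 : β 0 = 0 := (mul_eq_zero.mp e0).resolve_left (ne_of_gt hs)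
    have hb1 : β 1 = 0 := (mul_eq_zero.mp e1).resolve_left (ne_of_gt hs)
    exact h12 (by rw [hb0, hb1])
  have hC : v ({0,1,2,3} : Finset (Fin 5)) = ![β 0, β 1, β 2, β 3, 0] := by
    rw [hA, hB] at hsum3
    simpa using hsum3
  rw [hGdef] at hg
  simp only [Finset.mem_insert, Finset.mem_singleton] at hg
  rcases hg with rfl | rfl | rfl | rfl
  · rw [hA, hv1]
  · rw [hB, hv2]
  · rw [hC, hv3]
  · rw [h4, hv4]
end
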